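/- Bound on the regret risk of threshold treatment rules: let σ > 0 and k ≥ 0, and let Φ denote the cumulative distribution function of the standard normal distribution. For c ∈ [−k, k] and (μ, μ*) ∈ ℝ² with |μ − μ*| ≤ k, define the regret risk ρ(c, μ, μ*) = μ*·(𝟙{μ* ≥ 0} − Φ((μ − c)/σ)). Then 0 ≤ ρ(c, μ, μ*) ≤ σ·sup_{x ≥ 0} x·Φ(2k/σ − x), and the supremum on the right-hand side is finite. -/

import Mathlib

open Real MeasureTheory Set ProbabilityTheory
open scoped NNReal

lemma gauss_cdf_eq (a : ℝ) :
    ProbabilityTheory.cdf (gaussianReal 0 1) a = ∫ x in Iic a, gaussianPDFReal 0 1 x := by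
  rw [ProbabilityTheory.cdf_eq_real, measureReal_def, gaussianReal_apply_eq_integral 0 one_ne_zero,
    ENNReal.toReal_ofReal
      (setIntegral_nonneg measurableSet_Iic fun x _ => gaussianPDFReal_nonneg 0 1 x)]

lemma gauss_pdf_even (x : ℝ) : gaussianPDFReal 0 1 (-x) = gaussianPDFReal 0 1 x := by
  simp [gaussianPDFReal, neg_sq]

lemma gauss_cdf_symm (z : ℝ) :
    ProbabilityTheory.cdf (gaussianReal 0 1) (-z)
      = 1 - ProbabilityTheory.cdf (gaussianReal 0 1) z := by
  have hint : Integrable (gaussianPDFReal 0 1) := integrable_gaussianPDFReal 0 1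
  have h1 : (∫ x in Iic (-z), gaussianPDFReal 0 1 x) = ∫ x in Ioi z, gaussianPDFReal 0 1 x := by
    calc (∫ x in Iic (-z), gaussianPDFReal 0 1 x)
        = ∫ x in Iic (-z), gaussianPDFReal 0 1 (-x) := by simp_rw [gauss_pdf_even]
      _ = ∫ x in Ioi z, gaussianPDFReal 0 1 x := by
          simpa using integral_comp_neg_Iic (-z) (gaussianPDFReal 0 1)
  have hsplit : (∫ x in Iic z, gaussianPDFReal 0 1 x) + ∫ x in Ioi z, gaussianPDFReal 0 1 x
      = 1 := by
    rw [← setIntegral_union (Iic_disjoint_Ioi le_rfl) measurableSet_Ioi hint.integrableOn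
      hint.integrableOn, Iic_union_Ioi, setIntegral_univ,
      integral_gaussianPDFReal_eq_one 0 one_ne_zero]
  rw [gauss_cdf_eq, gauss_cdf_eq, h1]
  linarith

lemma gauss_pdf_le_exp {x : ℝ} (hx : x ≤ -2) : gaussianPDFReal 0 1 x ≤ rexp x := by
  rw [gaussianPDFReal]
  have hpi : (3:ℝ) < π := Real.pi_gt_three
  have h1 : (√(2 * π * (1:ℝ≥0)))⁻¹ ≤ 1 := by
    rw [inv_le_one_iff₀]
    right
    rw [show ((2:ℝ) * π * (1:ℝ≥0)) = 2 * π by norm_num]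
    nlinarith [Real.sq_sqrt (by positivity : (0:ℝ) ≤ 2 * π), Real.sqrt_nonneg (2 * π)]
  have h2 : rexp (-(x - 0)^2 / (2 * (1:ℝ≥0))) ≤ rexp x := by
    apply Real.exp_le_exp.2
    rw [show ((2:ℝ) * (1:ℝ≥0)) = 2 by norm_num]
    nlinarith
  calc (√(2 * π * (1:ℝ≥0)))⁻¹ * rexp (-(x - 0)^2 / (2 * (1:ℝ≥0)))
      ≤ 1 * rexp x := mul_le_mul h1 h2 (Real.exp_pos _).le one_pos.le
    _ = rexp x := one_mul _

lemma gauss_cdf_tail {a : ℝ} (ha : a ≤ -2) :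
    ProbabilityTheory.cdf (gaussianReal 0 1) a ≤ rexp a := by
  rw [gauss_cdf_eq]
  calc (∫ x in Iic a, gaussianPDFReal 0 1 x) ≤ ∫ x in Iic a, rexp x :=
      setIntegral_mono_on (integrable_gaussianPDFReal 0 1).integrableOn
        (integrableOn_exp_Iic a) measurableSet_Iic
        (fun x hx => gauss_pdf_le_exp (le_trans hx ha))
    _ = rexp a := integral_exp_Iic a




open Finset ProbabilityTheory

/-- Bound on the regret risk of threshold treatment rules: with `Φ` the
standard normal CDF, `c ∈ [−k,k]`, and `|μ − μ*| ≤ k`, the regret risk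
`ρ(c,μ,μ*) = μ*·(𝟙{μ* ≥ 0} − Φ((μ−c)/σ))` satisfies
`0 ≤ ρ(c,μ,μ*) ≤ σ · sup_{x ≥ 0} x·Φ(2k/σ − x)`, and the supremum is finite. -/
theorem threshold_rule_regret_bound
    (σ k : ℝ) (hσ : 0 < σ) (hk : 0 ≤ k)
    (Φ : ℝ → ℝ) (hΦ : ∀ x, Φ x = ProbabilityTheory.cdf (gaussianReal 0 1) x)
    (c μ μs : ℝ) (hc : c ∈ Set.Icc (-k) k) (hμ : |μ - μs| ≤ k) :
    0 ≤ μs * ((if 0 ≤ μs then (1 : ℝ) else 0) - Φ ((μ - c) / σ))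
    ∧ μs * ((if 0 ≤ μs then (1 : ℝ) else 0) - Φ ((μ - c) / σ))
        ≤ σ * sSup {y : ℝ | ∃ x : ℝ, 0 ≤ x ∧ y = x * Φ (2 * k / σ - x)}
    ∧ BddAbove {y : ℝ | ∃ x : ℝ, 0 ≤ x ∧ y = x * Φ (2 * k / σ - x)} := by
  set t : ℝ := 2 * k / σ with ht_def
  have ht : 0 ≤ t := by positivity
  have hΦ0 : ∀ x, 0 ≤ Φ x := fun x => (hΦ x).symm ▸ cdf_nonneg _ x
  have hΦ1 : ∀ x, Φ x ≤ 1 := fun x => (hΦ x).symm ▸ cdf_le_one _ x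
  have hmono : ∀ {a b : ℝ}, a ≤ b → Φ a ≤ Φ b := by
    intro a b hab; rw [hΦ, hΦ]; exact monotone_cdf _ hab
  have hsymm : ∀ z, Φ (-z) = 1 - Φ z := by
    intro z; rw [hΦ, hΦ]; exact gauss_cdf_symm z
  have htail : ∀ {a : ℝ}, a ≤ -2 → Φ a ≤ rexp a := by
    intro a ha; rw [hΦ]; exact gauss_cdf_tail ha
  set S : Set ℝ := {y : ℝ | ∃ x : ℝ, 0 ≤ x ∧ y = x * Φ (t - x)} with hS_def
  -- boundedness
  have hbdd : BddAbove S := by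
    refine ⟨max (t + 2) (rexp t), ?_⟩
    rintro y ⟨x, hx, rfl⟩
    rcases le_or_gt x (t + 2) with h | h
    · calc x * Φ (t - x) ≤ x * 1 := mul_le_mul_of_nonneg_left (hΦ1 _) hx
        _ = x := mul_one x
        _ ≤ max (t + 2) (rexp t) := le_trans h (le_max_left _ _)
    · have h2 : t - x ≤ -2 := by linarith
      have h3 : x * Φ (t - x) ≤ x * rexp (t - x) :=
        mul_le_mul_of_nonneg_left (htail h2) hx
      have h4 : x * rexp (t - x) ≤ rexp t := by
        rw [Real.exp_sub]
        rw [div_eq_mul_inv, ← mul_assoc]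
        have hex : x ≤ rexp x := le_trans (by linarith) (Real.add_one_le_exp x)
        calc x * rexp t * (rexp x)⁻¹ ≤ rexp x * rexp t * (rexp x)⁻¹ := by
              apply mul_le_mul_of_nonneg_right _ (by positivity)
              exact mul_le_mul_of_nonneg_right hex (Real.exp_pos t).le
          _ = rexp t := by field_simp
      exact le_trans (le_trans h3 h4) (le_max_right _ _)
  have hmem : ∀ x : ℝ, 0 ≤ x → x * Φ (t - x) ∈ S := fun x hx => ⟨x, hx, rfl⟩
  have hsup : ∀ x : ℝ, 0 ≤ x → x * Φ (t - x) ≤ sSup S := fun x hx => le_csSup hbdd (hmem x hx)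
  have habs := abs_le.1 hμ
  rcases le_or_gt 0 μs with hpos | hneg
  · -- μs ≥ 0
    simp only [if_pos hpos]
    have hswitch : 1 - Φ ((μ - c) / σ) = Φ ((c - μ) / σ) := by
      rw [show (c - μ) / σ = -((μ - c) / σ) by ring, hsymm]
    rw [hswitch]
    refine ⟨mul_nonneg hpos (hΦ0 _), ?_, hbdd⟩
    have harg : (c - μ) / σ ≤ t - μs / σ := by
      rw [ht_def, ← sub_div]
      exact (div_le_div_iff_of_pos_right hσ).mpr (by linarith [habs.1, habs.2, hc.1, hc.2])
    calc μs * Φ ((c - μ) / σ) ≤ μs * Φ (t - μs / σ) :=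
          mul_le_mul_of_nonneg_left (hmono harg) hpos
      _ = σ * (μs / σ * Φ (t - μs / σ)) := by field_simp
      _ ≤ σ * sSup S :=
          mul_le_mul_of_nonneg_left (hsup (μs / σ) (div_nonneg hpos hσ.le)) hσ.le
  · -- μs < 0
    simp only [if_neg (not_le.mpr hneg)]
    have hz0 := hΦ0 ((μ - c) / σ)
    refine ⟨by nlinarith, ?_, hbdd⟩
    have harg : (μ - c) / σ ≤ t - (-μs) / σ := by
      rw [ht_def, ← sub_div]
      exact (div_le_div_iff_of_pos_right hσ).mpr (by linarith [habs.1, habs.2, hc.1, hc.2])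
    have hnn : (0:ℝ) ≤ -μs := by linarith
    calc μs * (0 - Φ ((μ - c) / σ)) = (-μs) * Φ ((μ - c) / σ) := by ring
      _ ≤ (-μs) * Φ (t - (-μs) / σ) := mul_le_mul_of_nonneg_left (hmono harg) hnn
      _ = σ * ((-μs) / σ * Φ (t - (-μs) / σ)) := by field_simp
      _ ≤ σ * sSup S :=
          mul_le_mul_of_nonneg_left (hsup ((-μs) / σ) (div_nonneg hnn hσ.le)) hσ.le
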